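/- Write P = Σᵢ₌₁³ aᵢσᵢ with aᵢ ∈ ℂ and T = Σᵢ₌₀³ cᵢτᵢ with cᵢ ∈ ℝ, where τᵢ = τ₀∘σᵢ (σ₀ = I). Let f = (Re a₁, Re a₂, Re a₃), b = (Im a₁, Im a₂, Im a₃), c = (c₁, c₂, c₃) ∈ ℝ³. Then PT = TP (as maps on ℂ²) if and only if c₀ f + b × c = 0 and f · c = 0. -/

import Mathlib

open Matrix Complex

noncomputable def pauli : Fin 3 → Matrix (Fin 2) (Fin 2) ℂ :=
  ![!![0, 1; 1, 0], !![0, -I; I, 0], !![1, 0; 0, -1]]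

/-- The antilinear map `τ₀(x₁, x₂) = (-x̄₂, x̄₁)`. -/
noncomputable def tau0 (x : Fin 2 → ℂ) : Fin 2 → ℂ :=
  ![-(starRingEnd ℂ (x 1)), starRingEnd ℂ (x 0)]

/-- `τᵢ` for `i = 0, 1, 2, 3`: `τ₀` and `τᵢ = τ₀ ∘ σᵢ`. -/
noncomputable def tau : Fin 4 → (Fin 2 → ℂ) → (Fin 2 → ℂ)
  | 0 => tau0
  | 1 => fun x => tau0 ((pauli 0).mulVec x)
  | 2 => fun x => tau0 ((pauli 1).mulVec x)
  | 3 => fun x => tau0 ((pauli 2).mulVec x)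

lemma psum (a : Fin 3 → ℂ) :
    (∑ i : Fin 3, a i • pauli i) = !![a 2, a 0 - I * a 1; a 0 + I * a 1, -(a 2)] := by
  simp [Fin.sum_univ_three, pauli]
  constructor <;> ring

lemma tsum' (c : Fin 4 → ℝ) (x : Fin 2 → ℂ) :
    (∑ i : Fin 4, (c i : ℂ) • tau i x) =
      ![(-c 1 + c 2 * I) * (starRingEnd ℂ (x 0)) + (-c 0 + c 3) * (starRingEnd ℂ (x 1)),
        (c 0 + c 3) * (starRingEnd ℂ (x 0)) + (c 1 + c 2 * I) * (starRingEnd ℂ (x 1))] := by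
  funext j
  fin_cases j <;>
  · simp [Fin.sum_univ_four, tau, tau0, pauli, Matrix.mulVec, dotProduct,
      Fin.sum_univ_two]
    ring

lemma mv (A : Matrix (Fin 2) (Fin 2) ℂ) (x : Fin 2 → ℂ) :
    A.mulVec x = ![A 0 0 * x 0 + A 0 1 * x 1, A 1 0 * x 0 + A 1 1 * x 1] := by
  funext j
  fin_cases j <;> simp [Matrix.mulVec, dotProduct, Fin.sum_univ_two]

theorem stmt9 (a : Fin 3 → ℂ) (c : Fin 4 → ℝ)
    (P : Matrix (Fin 2) (Fin 2) ℂ) (hP : P = ∑ i : Fin 3, a i • pauli i)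
    (T : (Fin 2 → ℂ) → (Fin 2 → ℂ)) (hT : ∀ x, T x = ∑ i : Fin 4, (c i : ℂ) • tau i x)
    (f b ctil : Fin 3 → ℝ)
    (hf : f = fun i => (a i).re) (hb : b = fun i => (a i).im)
    (hc : ctil = fun i : Fin 3 => c i.succ) :
    (∀ x, P.mulVec (T x) = T (P.mulVec x)) ↔
      (c 0 • f + crossProduct b ctil = 0 ∧ f ⬝ᵥ ctil = 0) := by
  subst hP hf hb hc
  simp only [hT, tsum', psum, mv]
  constructor
  · intro h
    have h1 := h ![1, 0]
    have h2 := h ![0, 1]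
    simp [funext_iff, Fin.forall_fin_two, Complex.ext_iff] at h1 h2
    obtain ⟨⟨e1, e2⟩, e3, e4⟩ := h1
    obtain ⟨⟨g1, g2⟩, g3, g4⟩ := h2
    refine ⟨?_, ?_⟩
    · funext i
      fin_cases i <;> simp [crossProduct, dotProduct, show (2:Fin 3).succ = (3:Fin 4) from rfl] <;>
        [ (first | linear_combination e1/2 | linear_combination -e1/2);
          (first | linear_combination e2/2 | linear_combination -e2/2);
          (first | linear_combination (g1+e3)/4 | linear_combination -(g1+e3)/4
                 | linear_combination (g1-e3)/4 | linear_combination (e3-g1)/4)]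
    · simp [dotProduct, Fin.sum_univ_three, show (2:Fin 3).succ = (3:Fin 4) from rfl]
      first | linear_combination (g1-e3)/4 | linear_combination (e3-g1)/4
            | linear_combination (g1+e3)/4 | linear_combination -(g1+e3)/4
  · rintro ⟨h1, h2⟩ x
    have t1 := congrFun h1 0
    have t2 := congrFun h1 1
    have t3 := congrFun h1 2
    simp [crossProduct, show (2:Fin 3).succ = (3:Fin 4) from rfl] at t1 t2 t3
    simp [dotProduct, Fin.sum_univ_three, show (2:Fin 3).succ = (3:Fin 4) from rfl] at h2
    funext j
    fin_cases j <;> simp [Complex.ext_iff] <;> refine ⟨?_, ?_⟩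
    · linear_combination (2*(x 0).re)*t1 - (2*(x 0).im)*t2 - (2*(x 1).re)*t3 + (2*(x 1).re)*h2
    · linear_combination (-2*(x 0).im)*t1 - (2*(x 0).re)*t2 + (2*(x 1).im)*t3 - (2*(x 1).im)*h2
    · linear_combination (-2*(x 0).re)*t3 - (2*(x 0).re)*h2 - (2*(x 1).re)*t1 - (2*(x 1).im)*t2
    · linear_combination (2*(x 0).im)*t3 + (2*(x 0).im)*h2 + (2*(x 1).im)*t1 - (2*(x 1).re)*t2
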